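/- Exchange lemma in convex bipartite graphs: with the lex-convex ordering as above and x_r = right(y_1), if D is a minimum vertex-edge dominating set of G containing some x_β ∈ N(y_1), then D' = (D \ {x_β}) ∪ {x_r} is also a minimum vertex-edge dominating set of G containing x_r. -/

import Mathlib

open SimpleGraph

/-- The closed neighbourhood `N[v] = {v} ∪ N(v)` of a vertex. -/
def closedNbhd {V : Type*} (G : SimpleGraph V) (v : V) : Set V :=
  insert v (G.neighborSet v)

/-- `D` is a vertex-edge dominating set: every edge `uv` has a vertex of `D`
in `N[u] ∪ N[v]`. -/
def IsVEDomSet {V : Type*} (G : SimpleGraph V) (D : Set V) : Prop :=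
  ∀ ⦃u v : V⦄, G.Adj u v → ((closedNbhd G u ∪ closedNbhd G v) ∩ D).Nonempty

/-- The vertex-edge domination number `γ_ve(G)`. -/
noncomputable def vedNumber {V : Type*} (G : SimpleGraph V) : ℕ :=
  sInf {n | ∃ D : Set V, IsVEDomSet G D ∧ D.ncard = n}

theorem convex_exchange {V : Type*} {n₁ n₂ : ℕ} [NeZero n₂] [Fintype V] (G : SimpleGraph V)
    (x : Fin n₁ → V) (y : Fin n₂ → V)
    (hbip : ∀ (i : Fin n₁) (v : V), G.Adj (x i) v → ∃ k : Fin n₂, v = y k)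
    (left right : Fin n₁ → Fin n₂)
    (hleft : ∀ i, G.Adj (x i) (y (left i)))
    (hright : ∀ i, G.Adj (x i) (y (right i)))
    (hbounds : ∀ i k, G.Adj (x i) (y k) → left i ≤ k ∧ k ≤ right i)
    (hconv : ∀ i k, left i ≤ k → k ≤ right i → G.Adj (x i) (y k))
    (hlex : ∀ i j : Fin n₁, i < j →
      left i < left j ∨ (left i = left j ∧ right i ≤ right j))
    (hconn : G.Connected)
    (r : Fin n₁) (hr : G.Adj (x r) (y 0))
    (hrmax : ∀ i : Fin n₁, G.Adj (x i) (y 0) → i ≤ r)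
    (D : Set V) (hD : IsVEDomSet G D) (hmin : D.ncard = vedNumber G)
    (β : Fin n₁) (hβ : G.Adj (x β) (y 0)) (hβD : x β ∈ D) :
    IsVEDomSet G ((D \ {x β}) ∪ {x r}) ∧
      ((D \ {x β}) ∪ {x r}).ncard = vedNumber G ∧
      x r ∈ (D \ {x β}) ∪ {x r} := by
  -- left β = left r = 0
  have hlβ : left β = 0 := le_antisymm ((hbounds β 0 hβ).1) (Fin.zero_le _)
  have hlr : left r = 0 := le_antisymm ((hbounds r 0 hr).1) (Fin.zero_le _)
  have hβr : β ≤ r := hrmax β hβ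
  have hrt : right β ≤ right r := by
    rcases lt_or_eq_of_le hβr with h | h
    · rcases hlex β r h with h' | h'
      · rw [hlβ, hlr] at h'; exact absurd h' (lt_irrefl _)
      · exact h'.2
    · rw [h]
  -- key: neighbours of x β are neighbours of x r
  have key : ∀ v : V, G.Adj (x β) v → G.Adj (x r) v := by
    intro v hv
    obtain ⟨k, rfl⟩ := hbip β v hv
    have hb := hbounds β k hv
    exact hconv r k (by rw [hlr]; exact Fin.zero_le _) (le_trans hb.2 hrt)
  have hved : IsVEDomSet G ((D \ {x β}) ∪ {x r}) := by
    intro u v huv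
    obtain ⟨w, hw, hwD⟩ := hD huv
    by_cases hwe : w = x β
    · subst hwe
      -- x β ∈ N[u] ∪ N[v]; show x r ∈ N[u] ∪ N[v]
      refine ⟨x r, ?_, Or.inr rfl⟩
      rcases hw with hw | hw
      · rcases hw with hw | hw
        · -- x β = u
          right; right
          have : G.Adj (x β) v := by rw [hw]; exact huv
          exact (key v this).symm
        · -- x β ∈ N(u)
          left; right
          exact (key u ((G.mem_neighborSet u (x β)).mp hw).symm).symm
      · rcases hw with hw | hw
        · left; right
          have : G.Adj (x β) u := by rw [hw]; exact huv.symm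
          exact (key u this).symm
        · right; right
          exact (key v ((G.mem_neighborSet v (x β)).mp hw).symm).symm
    · exact ⟨w, hw, Or.inl ⟨hwD, hwe⟩⟩
  refine ⟨hved, ?_, Or.inr rfl⟩
  have hfin : D.Finite := Set.toFinite D
  have h1 : ((D \ {x β}) ∪ {x r}).ncard ≤ D.ncard := by
    have : ((D \ {x β}) ∪ {x r}) = insert (x r) (D \ {x β}) := by
      ext z; simp [or_comm]
    rw [this]
    calc (insert (x r) (D \ {x β})).ncard ≤ (D \ {x β}).ncard + 1 :=
          Set.ncard_insert_le _ _
      _ = D.ncard - 1 + 1 := by rw [Set.ncard_diff_singleton_of_mem hβD]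
      _ = D.ncard := Nat.succ_pred_eq_of_pos ((Set.ncard_pos hfin).mpr ⟨_, hβD⟩)
  have h2 : vedNumber G ≤ ((D \ {x β}) ∪ {x r}).ncard :=
    Nat.sInf_le ⟨_, hved, rfl⟩
  omega
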